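/- The decomposition M(b̂_J − β⁰_J) = T̂_J^{-1/2}(X_J − X_{-J}Γ̂_J)ᵀε/√n − √n λ Ẑ_Jᵀ(β̂_{-J} − β⁰_{-J}) holds deterministically (as an algebraic identity), where the KKT conditions X_{-J}ᵀ(X_J − X_{-J}Γ̂_J)T̂_J^{-1/2}/n = λẐ_J are assumed. -/

import Mathlib

open Matrix BigOperators

/-- Deterministic decomposition of the de-sparsified estimator: with
`E := X_J − X_{-J}Γ̂_J`, `T̃_J := EᵀX_J/n`, `T̂_J := EᵀE/n`, `W := T̂_J^{-1/2}`,
`M := √n W T̃_J`, `b̂_J := β̂_J + T̃_J^{-1}Eᵀ(Y − Xβ̂)/n` and the KKT conditions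
`X_{-J}ᵀ E W/n = λẐ_J`, one has the algebraic identity
`M(b̂_J − β⁰_J) = W Eᵀε/√n − √n λ Ẑ_Jᵀ(β̂_{-J} − β⁰_{-J})`.
Here coordinates are split into the `q = |J|` coordinates in `J` (design `XJ`) and the
`m = p − |J|` remaining coordinates (design `XmJ`). -/
theorem stmt_4 {n q m : ℕ} (hn : 0 < n)
    (XJ : Matrix (Fin n) (Fin q) ℝ) (XmJ : Matrix (Fin n) (Fin m) ℝ)
    (βJ0 : Fin q → ℝ) (βmJ0 : Fin m → ℝ) (ε : Fin n → ℝ) (Y : Fin n → ℝ)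
    (hY : Y = XJ *ᵥ βJ0 + XmJ *ᵥ βmJ0 + ε)
    (Γ : Matrix (Fin m) (Fin q) ℝ) (lam : ℝ)
    (W : Matrix (Fin q) (Fin q) ℝ) (hWsymm : Wᵀ = W)
    (hW : W * ((1 / (n : ℝ)) • ((XJ - XmJ * Γ)ᵀ * (XJ - XmJ * Γ))) * W = 1)
    (hT : IsUnit ((1 / (n : ℝ)) • ((XJ - XmJ * Γ)ᵀ * XJ)).det)
    (Zhat : Matrix (Fin m) (Fin q) ℝ)
    (hKKT : (1 / (n : ℝ)) • (XmJᵀ * (XJ - XmJ * Γ) * W) = lam • Zhat)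
    (βhatJ : Fin q → ℝ) (βhatmJ : Fin m → ℝ) :
    (Real.sqrt n • (W * ((1 / (n : ℝ)) • ((XJ - XmJ * Γ)ᵀ * XJ)))) *ᵥ
        ((βhatJ + ((1 / (n : ℝ)) • ((XJ - XmJ * Γ)ᵀ * XJ))⁻¹ *ᵥ
          ((1 / (n : ℝ)) • ((XJ - XmJ * Γ)ᵀ *ᵥ
            (Y - XJ *ᵥ βhatJ - XmJ *ᵥ βhatmJ)))) - βJ0) =
      (Real.sqrt n)⁻¹ • (W *ᵥ ((XJ - XmJ * Γ)ᵀ *ᵥ ε)) -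
        (Real.sqrt n * lam) • (Zhatᵀ *ᵥ (βhatmJ - βmJ0)) := by
  subst hY
  set E := XJ - XmJ * Γ with hE
  set T := (1 / (n : ℝ)) • (Eᵀ * XJ) with hTdef
  have hTinv : T * T⁻¹ = 1 := Matrix.mul_nonsing_inv _ hT
  have hsq : Real.sqrt n * Real.sqrt n = (n : ℝ) := Real.mul_self_sqrt (by positivity)
  have hs0 : Real.sqrt n ≠ 0 := by positivity
  have hn0 : (n : ℝ) ≠ 0 := by positivity
  -- residual
  have hr : (XJ *ᵥ βJ0 + XmJ *ᵥ βmJ0 + ε) - XJ *ᵥ βhatJ - XmJ *ᵥ βhatmJ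
      = XJ *ᵥ (βJ0 - βhatJ) + XmJ *ᵥ (βmJ0 - βhatmJ) + ε := by
    rw [Matrix.mulVec_sub, Matrix.mulVec_sub]; abel
  -- key: T applied to the centered estimator
  have key : T *ᵥ ((βhatJ + T⁻¹ *ᵥ ((1 / (n : ℝ)) • (Eᵀ *ᵥ
        ((XJ *ᵥ βJ0 + XmJ *ᵥ βmJ0 + ε) - XJ *ᵥ βhatJ - XmJ *ᵥ βhatmJ)))) - βJ0)
      = (1 / (n : ℝ)) • (Eᵀ *ᵥ (XmJ *ᵥ (βmJ0 - βhatmJ))) + (1 / (n : ℝ)) • (Eᵀ *ᵥ ε) := by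
    rw [hr]
    have hTT : ∀ v : Fin q → ℝ, T *ᵥ (T⁻¹ *ᵥ v) = v := by
      intro v
      rw [Matrix.mulVec_mulVec, hTinv, Matrix.one_mulVec]
    rw [Matrix.mulVec_sub, Matrix.mulVec_add, hTT]
    have hXJ : (1 / (n : ℝ)) • (Eᵀ *ᵥ (XJ *ᵥ (βJ0 - βhatJ))) = T *ᵥ (βJ0 - βhatJ) := by
      rw [hTdef, Matrix.smul_mulVec, Matrix.mulVec_mulVec]
    rw [Matrix.mulVec_add, Matrix.mulVec_add, smul_add, smul_add, hXJ,
      Matrix.mulVec_sub, Matrix.mulVec_sub]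
    abel
  -- KKT transposed
  have hKKT' : (1 / (n : ℝ)) • (W * Eᵀ * XmJ) = lam • Zhatᵀ := by
    have := congrArg Matrix.transpose hKKT
    simpa [Matrix.transpose_smul, Matrix.transpose_mul, hWsymm, Matrix.mul_assoc] using this
  calc (Real.sqrt n • (W * T)) *ᵥ ((βhatJ + T⁻¹ *ᵥ ((1 / (n : ℝ)) • (Eᵀ *ᵥ
        ((XJ *ᵥ βJ0 + XmJ *ᵥ βmJ0 + ε) - XJ *ᵥ βhatJ - XmJ *ᵥ βhatmJ)))) - βJ0)
      = Real.sqrt n • (W *ᵥ ((1 / (n : ℝ)) • (Eᵀ *ᵥ (XmJ *ᵥ (βmJ0 - βhatmJ)))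
          + (1 / (n : ℝ)) • (Eᵀ *ᵥ ε))) := by
        rw [Matrix.smul_mulVec, ← Matrix.mulVec_mulVec, key]
    _ = (Real.sqrt n)⁻¹ • (W *ᵥ (Eᵀ *ᵥ ε)) - (Real.sqrt n * lam) • (Zhatᵀ *ᵥ (βhatmJ - βmJ0)) := by
        have hA : Real.sqrt n • (W *ᵥ ((1 / (n : ℝ)) • (Eᵀ *ᵥ (XmJ *ᵥ (βmJ0 - βhatmJ)))))
            = -((Real.sqrt n * lam) • (Zhatᵀ *ᵥ (βhatmJ - βmJ0))) := by
          have h1 : W *ᵥ ((1 / (n : ℝ)) • (Eᵀ *ᵥ (XmJ *ᵥ (βmJ0 - βhatmJ))))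
              = ((1 / (n : ℝ)) • (W * Eᵀ * XmJ)) *ᵥ (βmJ0 - βhatmJ) := by
            rw [Matrix.mulVec_smul, Matrix.smul_mulVec, Matrix.mulVec_mulVec,
              Matrix.mulVec_mulVec]
          rw [h1, hKKT', Matrix.smul_mulVec, smul_smul]
          have h2 : βmJ0 - βhatmJ = -(βhatmJ - βmJ0) := by abel
          rw [h2, Matrix.mulVec_neg, smul_neg]
        have hB : Real.sqrt n • (W *ᵥ ((1 / (n : ℝ)) • (Eᵀ *ᵥ ε)))
            = (Real.sqrt n)⁻¹ • (W *ᵥ (Eᵀ *ᵥ ε)) := by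
          rw [Matrix.mulVec_smul, smul_smul]
          congr 1
          field_simp
          exact Real.sq_sqrt (by positivity)
        rw [Matrix.mulVec_add, smul_add, hA, hB]
        abel
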